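/- If (a_n) and (b_n) are sequences of positive real numbers such that lim_{n→∞} n(a_n/a_{n+1} − 1) = p and lim_{n→∞} n(b_n/b_{n+1} − 1) = q with p < q, then the limit lim_{n→∞} n(|a_n − b_n|/|a_{n+1} − b_{n+1}| − 1) exists and equals p. -/

import Mathlib

open Filter

private lemma raabe_aux (x y u v n : ℝ) (hx : x ≠ 0) (hy : y ≠ 0) (hv : v ≠ 0)
    (hyv : y - v ≠ 0) :
    n * (x / y - 1) + (x / y) * (-(v / y) * (n * ((u / x) / (v / y) - 1))) / (1 - v / y)
      = n * ((x - u) / (y - v) - 1) := by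
  have h1 : (1 : ℝ) - v / y = (y - v) / y := by field_simp
  have h2 : (u / x) / (v / y) = (u * y) / (x * v) := by field_simp
  rw [h1, h2, div_div_eq_mul_div]
  field_simp
  ring

/-- If `(aₙ)` and `(bₙ)` are positive sequences with Raabe limits `p < q`, then
`n * (|aₙ - bₙ| / |a_{n+1} - b_{n+1}| - 1) → p`. -/
theorem raabe_value_sub (a b : ℕ → ℝ) (ha : ∀ n, 0 < a n) (hb : ∀ n, 0 < b n)
    (p q : ℝ)
    (hp : Tendsto (fun n : ℕ => (n : ℝ) * (a n / a (n + 1) - 1)) atTop (nhds p))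
    (hq : Tendsto (fun n : ℕ => (n : ℝ) * (b n / b (n + 1) - 1)) atTop (nhds q))
    (hpq : p < q) :
    Tendsto (fun n : ℕ => (n : ℝ) * (|a n - b n| / |a (n + 1) - b (n + 1)| - 1))
      atTop (nhds p) := by
  have ha' : ∀ n, a n ≠ 0 := fun n => (ha n).ne'
  have hb' : ∀ n, b n ≠ 0 := fun n => (hb n).ne'
  set r : ℕ → ℝ := fun n => b n / a n with hrdef
  have hrpos : ∀ n, 0 < r n := fun n => div_pos (hb n) (ha n)
  -- a n / a (n+1) → 1
  have hA : Tendsto (fun n : ℕ => a n / a (n + 1)) atTop (nhds 1) := by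
    have h1 : Tendsto (fun n : ℕ => (n : ℝ) * (a n / a (n + 1) - 1) * (n : ℝ)⁻¹ + 1)
        atTop (nhds (p * 0 + 1)) :=
      (hp.mul tendsto_inv_atTop_nhds_zero_nat).add tendsto_const_nhds
    rw [show p * 0 + 1 = (1 : ℝ) by ring] at h1
    refine h1.congr' ?_
    filter_upwards [eventually_ge_atTop 1] with n hn
    have : (n : ℝ) ≠ 0 := Nat.cast_ne_zero.mpr (by omega)
    field_simp
    ring
  -- the Raabe quantity of r tends to q - p
  set s : ℕ → ℝ := fun n => (n : ℝ) * (r n / r (n + 1) - 1) with hsdef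
  have hs : Tendsto s atTop (nhds (q - p)) := by
    have key : ∀ n : ℕ, s n =
        ((n : ℝ) * (b n / b (n + 1) - 1) - (n : ℝ) * (a n / a (n + 1) - 1)) *
          (a n / a (n + 1))⁻¹ := by
      intro n
      simp only [hsdef, hrdef]
      field_simp [ha' n, ha' (n + 1), hb' n, hb' (n + 1)]
      ring
    have := (hq.sub hp).mul (hA.inv₀ one_ne_zero)
    simp only [inv_one, mul_one] at this
    exact this.congr fun n => (key n).symm
  have hc : 0 < q - p := sub_pos.mpr hpq
  -- exponent
  set e : ℝ := min (q - p) 1 / 2 with hedef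
  have he0 : 0 < e := by positivity
  have he1 : e ≤ 1 := by
    have : min (q - p) 1 ≤ 1 := min_le_right _ _
    simp only [hedef]; linarith
  have hec : e < q - p := by
    have : min (q - p) 1 ≤ q - p := min_le_left _ _
    simp only [hedef]; linarith
  -- r → 0
  have hr0 : Tendsto r atTop (nhds 0) := by
    have hev : ∀ᶠ n in atTop, e < s n := hs.eventually (eventually_gt_nhds hec)
    obtain ⟨N0, hN0⟩ := eventually_atTop.mp hev
    set N := max N0 1 with hNdef
    -- monotone decreasing of u n = n^e * r n from N on
    set u : ℕ → ℝ := fun n => (n : ℝ) ^ e * r n with hudef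
    have hstep : ∀ n, N ≤ n → u (n + 1) ≤ u n := by
      intro n hn
      have hn1 : 1 ≤ n := le_trans (le_max_right _ _) hn
      have hnpos : (0 : ℝ) < n := by exact_mod_cast hn1
      have hes : e < s n := hN0 n (le_trans (le_max_left _ _) hn)
      -- r n / r (n+1) ≥ 1 + e / n
      have hes' : e ≤ (n : ℝ) * (r n / r (n + 1) - 1) := by
        have := hes.le; simpa [hsdef] using this
      have h1 : 1 + e / n ≤ r n / r (n + 1) := by
        have h : e / n ≤ r n / r (n + 1) - 1 := by
          rw [div_le_iff₀ hnpos]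
          nlinarith [hes']
        linarith
      -- Bernoulli
      have h2 : ((n : ℝ) + 1) ^ e / (n : ℝ) ^ e ≤ 1 + e / n := by
        have hb1 : (1 + 1 / (n : ℝ)) ^ e ≤ 1 + e * (1 / n) :=
          rpow_one_add_le_one_add_mul_self
            (le_trans (by norm_num : (-1 : ℝ) ≤ 0) (by positivity)) he0.le he1
        have heq : (1 + 1 / (n : ℝ)) ^ e = ((n : ℝ) + 1) ^ e / (n : ℝ) ^ e := by
          rw [← Real.div_rpow (by positivity) hnpos.le]
          congr 1
          field_simp
        rw [heq] at hb1
        calc ((n : ℝ) + 1) ^ e / (n : ℝ) ^ e ≤ 1 + e * (1 / n) := hb1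
          _ = 1 + e / n := by ring
      have h3 : ((n : ℝ) + 1) ^ e / (n : ℝ) ^ e ≤ r n / r (n + 1) := le_trans h2 h1
      have hne : (0 : ℝ) < (n : ℝ) ^ e := Real.rpow_pos_of_pos hnpos e
      have hrn1 : 0 < r (n + 1) := hrpos (n + 1)
      rw [div_le_div_iff₀ hne hrn1] at h3
      simp only [hudef]
      push_cast
      nlinarith [h3]
    have hmono : ∀ n, N ≤ n → u n ≤ u N := by
      intro n hn
      induction n with
      | zero => simp_all
      | succ k ih =>
        rcases Nat.lt_or_ge k N with hk | hk
        · have : N = k + 1 := by omega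
          rw [this]
        · exact le_trans (hstep k hk) (ih hk)
    -- squeeze
    have hlim : Tendsto (fun n : ℕ => u N * (n : ℝ) ^ (-e)) atTop (nhds 0) := by
      have h1 : Tendsto (fun x : ℝ => x ^ (-e)) atTop (nhds 0) :=
        tendsto_rpow_neg_atTop he0
      have h2 : Tendsto (fun n : ℕ => ((n : ℝ)) ^ (-e)) atTop (nhds 0) :=
        h1.comp tendsto_natCast_atTop_atTop
      simpa using h2.const_mul (u N)
    refine squeeze_zero' ?_ ?_ hlim
    · filter_upwards with n using (hrpos n).le
    · filter_upwards [eventually_ge_atTop N] with n hn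
      have hn1 : 1 ≤ n := le_trans (le_max_right _ _) hn
      have hnpos : (0 : ℝ) < n := by exact_mod_cast hn1
      have hne : (0 : ℝ) < (n : ℝ) ^ e := Real.rpow_pos_of_pos hnpos e
      have := hmono n hn
      have hrn : r n = u n * (n : ℝ) ^ (-e) := by
        simp only [hudef]
        rw [mul_comm ((n:ℝ)^e) (r n), mul_assoc, ← Real.rpow_add hnpos]
        simp
      rw [hrn]
      have hneg : (0 : ℝ) < (n : ℝ) ^ (-e) := Real.rpow_pos_of_pos hnpos _
      exact mul_le_mul_of_nonneg_right this hneg.le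
  have hr1 : Tendsto (fun n : ℕ => r (n + 1)) atTop (nhds 0) :=
    hr0.comp (tendsto_add_atTop_nat 1)
  -- the auxiliary sequence g
  set g : ℕ → ℝ := fun n =>
    (n : ℝ) * (a n / a (n + 1) - 1) +
      (a n / a (n + 1)) * (-(r (n + 1)) * s n) / (1 - r (n + 1)) with hgdef
  have hg : Tendsto g atTop (nhds p) := by
    have hT2 : Tendsto (fun n : ℕ => (a n / a (n + 1)) * (-(r (n + 1)) * s n) / (1 - r (n + 1)))
        atTop (nhds 0) := by
      have hnum : Tendsto (fun n : ℕ => (a n / a (n + 1)) * (-(r (n + 1)) * s n))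
          atTop (nhds (1 * (-(0 : ℝ) * (q - p)))) := hA.mul (hr1.neg.mul hs)
      have hden : Tendsto (fun n : ℕ => 1 - r (n + 1)) atTop (nhds (1 - 0)) :=
        tendsto_const_nhds.sub hr1
      have h := hnum.div hden (by norm_num)
      rw [show (1 * (-(0 : ℝ) * (q - p))) / (1 - 0) = (0 : ℝ) by ring] at h
      exact h
    have h := hp.add hT2
    rw [add_zero] at h
    exact h
  -- eventual equality
  refine hg.congr' ?_
  have hev1 : ∀ᶠ n in atTop, r n < 1 := hr0.eventually (eventually_lt_nhds one_pos)
  have hev2 : ∀ᶠ n in atTop, r (n + 1) < 1 := hr1.eventually (eventually_lt_nhds one_pos)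
  filter_upwards [hev1, hev2] with n h1 h2
  have hlt1 : b n < a n := (div_lt_one (ha n)).mp h1
  have hlt2 : b (n + 1) < a (n + 1) := (div_lt_one (ha (n + 1))).mp h2
  have habs1 : |a n - b n| = a n - b n := abs_of_pos (by linarith)
  have habs2 : |a (n + 1) - b (n + 1)| = a (n + 1) - b (n + 1) := abs_of_pos (by linarith)
  simp only [hgdef, hsdef, hrdef, habs1, habs2]
  have hd : a (n + 1) - b (n + 1) ≠ 0 := by linarith
  exact raabe_aux (a n) (a (n + 1)) (b n) (b (n + 1)) (n : ℝ)
    (ha' n) (ha' (n + 1)) (hb' (n + 1)) hd
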